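/- Let x* ∈ X be an optimal solution of min{ f(x) : g_k(x) ≤ 0 ∀k, x ∈ X }, let λ* ≥ 0 (componentwise) satisfy inf_{x ∈ X}( f(x) + Σ_k λ*_k g_k(x) ) = f(x*), and set D = β² + L_f + 2‖λ*‖‖L_g‖ + 2C‖L_g‖. If the step size γ > 0 satisfies D + ‖L_g‖·R/√γ − 1/γ ≤ 0, then at every iteration t ≥ 0 of the algorithm, with Δ(t) = (1/2)(‖Q(t+1)‖² − ‖Q(t)‖²), one has Δ(t) + f(x(t)) ≤ f(x*) + (1/(2γ))(‖x* − x(t−1)‖² − ‖x* − x(t)‖²) + (1/2)(‖g(x(t))‖² − ‖g(x(t−1))‖²). -/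

import Mathlib

open Finset
set_option maxHeartbeats 4000000

local notation "⟪" x ", " y "⟫" => @inner ℝ _ _ x y

section aux
variable {E : Type*} [NormedAddCommGroup E] [InnerProductSpace ℝ E] [CompleteSpace E]

lemma inner_euc {m : ℕ} (y z : EuclideanSpace ℝ (Fin m)) : ⟪y, z⟫ = ∑ k, y k * z k := by
  simp [PiLp.inner_apply, RCLike.inner_apply, mul_comm]

lemma norm_sq_euc {m : ℕ} (y : EuclideanSpace ℝ (Fin m)) : ‖y‖ ^ 2 = ∑ k, (y k) ^ 2 := by
  rw [← real_inner_self_eq_norm_sq, inner_euc]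
  exact Finset.sum_congr rfl fun k _ => (sq (y k)).symm ▸ rfl

/-- Variational characterization of metric projection onto a convex set. -/
lemma proj_inner_le {K : Set E} (hK : Convex ℝ K) {p v : E} (hv : v ∈ K)
    (hmin : ∀ y ∈ K, ‖v - p‖ ≤ ‖y - p‖) : ∀ y ∈ K, ⟪p - v, y - v⟫ ≤ 0 := by
  have h : ‖p - v‖ = ⨅ w : K, ‖p - w‖ := by
    haveI : Nonempty ↑K := ⟨⟨v, hv⟩⟩
    apply le_antisymm
    · apply le_ciInf; intro w
      rw [norm_sub_rev]
      calc ‖v - p‖ ≤ ‖(w : E) - p‖ := hmin w w.2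
        _ = ‖p - (w : E)‖ := (norm_sub_rev _ _)
    · have hbdd : BddBelow (Set.range fun w : K => ‖p - (w : E)‖) :=
        ⟨0, by rintro r ⟨w, rfl⟩; exact norm_nonneg _⟩
      exact ciInf_le hbdd ⟨v, hv⟩
  exact (norm_eq_iInf_iff_real_inner_le_zero hK hv).1 h

/-- The line `s ↦ a + s • (b-a)` has derivative `b - a`. -/
lemma line_hasDerivAt (a b : E) (s : ℝ) :
    HasDerivAt (fun s : ℝ => a + s • (b - a)) (b - a) s := by
  simpa using ((hasDerivAt_id s).smul_const (b - a)).const_add a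

lemma comp_line_hasDerivAt (F : E → ℝ) (GF : E → E) (hd : ∀ z, HasGradientAt F (GF z) z)
    (a b : E) (s : ℝ) :
    HasDerivAt (fun s : ℝ => F (a + s • (b - a))) ⟪GF (a + s • (b - a)), b - a⟫ s := by
  have h1 := (hd (a + s • (b - a))).hasFDerivAt.comp_hasDerivAt s (line_hasDerivAt a b s)
  simp at h1; exact h1

lemma line_mem {K : Set E} (hK : Convex ℝ K) {a b : E} (ha : a ∈ K) (hb : b ∈ K)
    {s : ℝ} (h0 : 0 ≤ s) (h1 : s ≤ 1) : a + s • (b - a) ∈ K := by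
  have := hK ha hb (by linarith : (0:ℝ) ≤ 1 - s) h0 (by ring)
  convert this using 1
  rw [smul_sub, sub_smul, one_smul]; abel

/-- Descent lemma for Lipschitz-gradient functions on a convex set. -/
lemma descent_lemma {K : Set E} (hK : Convex ℝ K) (F : E → ℝ) (GF : E → E) (L : ℝ)
    (hd : ∀ z, HasGradientAt F (GF z) z)
    (hlip : ∀ z ∈ K, ∀ w ∈ K, ‖GF z - GF w‖ ≤ L * ‖z - w‖)
    {a b : E} (ha : a ∈ K) (hb : b ∈ K) :
    F b ≤ F a + ⟪GF a, b - a⟫ + L / 2 * ‖b - a‖ ^ 2 := by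
  set c : ℝ → E := fun s => a + s • (b - a) with hc
  set φ : ℝ → ℝ := fun s =>
    F (c s) - s * ⟪GF a, b - a⟫ - L / 2 * s ^ 2 * ‖b - a‖ ^ 2 with hφ
  have hder : ∀ s, HasDerivAt φ
      (⟪GF (c s), b - a⟫ - ⟪GF a, b - a⟫ - L * s * ‖b - a‖ ^ 2) s := by
    intro s
    have h1 := comp_line_hasDerivAt F GF hd a b s
    have h2 : HasDerivAt (fun s : ℝ => s * ⟪GF a, b - a⟫) ⟪GF a, b - a⟫ s := by
      simpa using (hasDerivAt_id s).mul_const ⟪GF a, b - a⟫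
    have h3 : HasDerivAt (fun s : ℝ => L / 2 * s ^ 2 * ‖b - a‖ ^ 2)
        (L * s * ‖b - a‖ ^ 2) s := by
      have := ((hasDerivAt_pow 2 s).const_mul (L / 2)).mul_const (‖b - a‖ ^ 2)
      exact this.congr_deriv (by rw [show (2:ℕ) - 1 = 1 from rfl, pow_one]; push_cast; ring)
    exact (h1.sub h2).sub h3
  have hmono : φ 1 ≤ φ 0 := by
    have hanti : AntitoneOn φ (Set.Icc 0 1) := by
      apply antitoneOn_of_deriv_nonpos (convex_Icc 0 1)
      · exact (Continuous.continuousOn (continuous_iff_continuousAt.2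
          (fun s => (hder s).differentiableAt.continuousAt)))
      · intro s hs
        exact (hder s).differentiableAt.differentiableWithinAt
      · intro s hs
        rw [interior_Icc] at hs
        rw [(hder s).deriv]
        have hcs : c s ∈ K := line_mem hK ha hb hs.1.le hs.2.le
        have h4 : ⟪GF (c s) - GF a, b - a⟫ ≤ ‖GF (c s) - GF a‖ * ‖b - a‖ :=
          real_inner_le_norm _ _
        have h5 : ‖GF (c s) - GF a‖ ≤ L * ‖c s - a‖ := hlip _ hcs _ ha
        have h6 : ‖c s - a‖ = s * ‖b - a‖ := by
          simp [hc, norm_smul, abs_of_nonneg hs.1.le]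
        have h7 : ⟪GF (c s) - GF a, b - a⟫ = ⟪GF (c s), b - a⟫ - ⟪GF a, b - a⟫ := by
          rw [inner_sub_left]
        have h8 := mul_le_mul_of_nonneg_right h5 (norm_nonneg (b - a))
        rw [h6] at h8
        nlinarith [h4, h7, h8]
    exact hanti (by norm_num) (by norm_num) (by norm_num)
  have hc0 : c 0 = a := by simp [hc]
  have hc1 : c 1 = b := by simp [hc]
  simp only [hφ, hc0, hc1] at hmono
  nlinarith [hmono]

/-- Gradient inequality for convex functions. -/
lemma convex_grad_le {K : Set E} (F : E → ℝ) {GFa : E}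
    (hF : ConvexOn ℝ K F) {a b : E} (hd : HasGradientAt F GFa a)
    (ha : a ∈ K) (hb : b ∈ K) :
    F a + ⟪GFa, b - a⟫ ≤ F b := by
  have hder : HasDerivAt (fun s : ℝ => F (a + s • (b - a))) ⟪GFa, b - a⟫ 0 := by
    have h0 : a + (0:ℝ) • (b - a) = a := by simp
    have hd2 := hd.hasFDerivAt
    rw [← h0] at hd2
    have h1 := hd2.comp_hasDerivAt 0 (line_hasDerivAt a b 0)
    simp at h1; exact h1
  have hslope : Filter.Tendsto (fun s : ℝ => (F (a + s • (b - a)) - F a) / s)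
      (nhdsWithin 0 (Set.Ioi 0)) (nhds ⟪GFa, b - a⟫) := by
    have := hasDerivAt_iff_tendsto_slope.1 hder
    have h2 := this.mono_left (nhdsWithin_mono 0 (by
      intro s hs
      simp only [Set.mem_compl_iff, Set.mem_singleton_iff]
      exact ne_of_gt hs))
    apply h2.congr'
    filter_upwards [self_mem_nhdsWithin] with s hs
    simp [slope_def_field]
  have hev : ∀ᶠ s in nhdsWithin (0:ℝ) (Set.Ioi 0),
      (F (a + s • (b - a)) - F a) / s ≤ F b - F a := by
    filter_upwards [Ioc_mem_nhdsGT_of_mem (Set.mem_Ico.2 ⟨le_refl 0, zero_lt_one⟩)] with s hs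
    rcases hs with ⟨hs0, hs1⟩
    have hmem : F (a + s • (b - a)) ≤ (1 - s) * F a + s * F b := by
      have h := hF.2 ha hb (by linarith : (0:ℝ) ≤ 1 - s) hs0.le (by ring)
      rw [show a + s • (b - a) = (1 - s) • a + s • b by rw [smul_sub, sub_smul, one_smul]; abel]
      simpa only [smul_eq_mul] using h
    rw [div_le_iff₀ hs0]
    nlinarith
  have := le_of_tendsto hslope hev
  linarith

end aux

/-- The stacked constraint vector `g(x) = (g_1(x), …, g_m(x))` as an element of
Euclidean space `ℝ^m`. -/
noncomputable def gvec {n m : ℕ} (g : Fin m → EuclideanSpace ℝ (Fin n) → ℝ)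
    (x : EuclideanSpace ℝ (Fin n)) : EuclideanSpace ℝ (Fin m) :=
  WithLp.toLp 2 (fun k => g k x)

lemma gvec_apply {n m : ℕ} (g : Fin m → EuclideanSpace ℝ (Fin n) → ℝ)
    (y : EuclideanSpace ℝ (Fin n)) (k : Fin m) : (gvec g y).ofLp k = g k y := rfl

/-- Refined drift-plus-penalty bound (Lemma 7, part 2 of the paper).
Indexing convention: `x 0` denotes the initial point `x(−1)` and `x (t+1)`
denotes the iterate `x(t)`; thus at iteration `t` of the paper,
`x(t) = x (t+1)`, `x(t−1) = x t`, and `Q(t) = Q t`. -/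
theorem drift_plus_penalty_refined_bound {n m : ℕ}
    (X : Set (EuclideanSpace ℝ (Fin n)))
    (hXne : X.Nonempty) (hXcv : Convex ℝ X) (hXcp : IsCompact X)
    (R : ℝ) (hR : ∀ z ∈ X, ∀ w ∈ X, ‖z - w‖ ≤ R)
    (f : EuclideanSpace ℝ (Fin n) → ℝ)
    (Gf : EuclideanSpace ℝ (Fin n) → EuclideanSpace ℝ (Fin n))
    (g : Fin m → EuclideanSpace ℝ (Fin n) → ℝ)
    (Gg : Fin m → EuclideanSpace ℝ (Fin n) → EuclideanSpace ℝ (Fin n))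
    (Lf : ℝ) (Lg : EuclideanSpace ℝ (Fin m)) (β C : ℝ)
    (hf : ConvexOn ℝ X f)
    (hfd : ∀ z, HasGradientAt f (Gf z) z)
    (hLf : 0 ≤ Lf)
    (hGfLip : ∀ z ∈ X, ∀ w ∈ X, ‖Gf z - Gf w‖ ≤ Lf * ‖z - w‖)
    (hg : ∀ k, ConvexOn ℝ X (g k))
    (hgd : ∀ (k : Fin m) z, HasGradientAt (g k) (Gg k z) z)
    (hLg : ∀ k, 0 ≤ Lg k)
    (hGgLip : ∀ (k : Fin m), ∀ z ∈ X, ∀ w ∈ X, ‖Gg k z - Gg k w‖ ≤ Lg k * ‖z - w‖)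
    (hgLip : ∀ z ∈ X, ∀ w ∈ X, ‖gvec g z - gvec g w‖ ≤ β * ‖z - w‖)
    (hgC : ∀ z ∈ X, ‖gvec g z‖ ≤ C)
    (xstar : EuclideanSpace ℝ (Fin n)) (hxs : xstar ∈ X)
    (hxsFeas : ∀ k, g k xstar ≤ 0)
    (hxsOpt : ∀ z ∈ X, (∀ k, g k z ≤ 0) → f xstar ≤ f z)
    (lam : EuclideanSpace ℝ (Fin m)) (hlam : ∀ k, 0 ≤ lam k)
    (hduality : IsGLB ((fun z => f z + ∑ k, lam k * g k z) '' X) (f xstar))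
    (D : ℝ) (hD : D = β ^ 2 + Lf + 2 * ‖lam‖ * ‖Lg‖ + 2 * C * ‖Lg‖)
    (γ : ℝ) (hγ : 0 < γ)
    (hγcond : D + ‖Lg‖ * R / Real.sqrt γ - 1 / γ ≤ 0)
    (x : ℕ → EuclideanSpace ℝ (Fin n)) (hxX : ∀ t, x t ∈ X)
    (Q : ℕ → EuclideanSpace ℝ (Fin m))
    (hQ0 : ∀ k, Q 0 k = max 0 (-(g k (x 0))))
    (hQr : ∀ (t : ℕ) (k : Fin m),
      Q (t + 1) k = max (-(g k (x (t + 1)))) (Q t k + g k (x (t + 1))))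
    (d : ℕ → EuclideanSpace ℝ (Fin n))
    (hd : ∀ t, d t = Gf (x t) + ∑ k, (Q t k + g k (x t)) • Gg k (x t))
    (hproj : ∀ t, ∀ y ∈ X,
      ‖x (t + 1) - (x t - γ • d t)‖ ≤ ‖y - (x t - γ • d t)‖) :
    ∀ t : ℕ,
      (1 / 2) * (‖Q (t + 1)‖ ^ 2 - ‖Q t‖ ^ 2) + f (x (t + 1)) ≤
        f xstar + (1 / (2 * γ)) * (‖xstar - x t‖ ^ 2 - ‖xstar - x (t + 1)‖ ^ 2)
          + (1 / 2) * (‖gvec g (x (t + 1))‖ ^ 2 - ‖gvec g (x t)‖ ^ 2) := by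
  subst hD
  have hC0 : 0 ≤ C := le_trans (norm_nonneg _) (hgC (x 0) (hxX 0))
  have hR0 : 0 ≤ R := by
    have h := hR xstar hxs xstar hxs
    simpa using h
  have hst : 0 < Real.sqrt γ := Real.sqrt_pos.2 hγ
  have hstsq : Real.sqrt γ ^ 2 = γ := Real.sq_sqrt hγ.le
  have hRst : 0 ≤ R / Real.sqrt γ := div_nonneg hR0 hst.le
  have hγ2 : 0 < 2 * γ := by linarith
  obtain ⟨M, hM⟩ : ∃ M : ℝ, M = 2 * ‖lam‖ + C + R / Real.sqrt γ := ⟨_, rfl⟩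
  -- queue entries are nonnegative
  have hQpos : ∀ t k, 0 ≤ Q t k := by
    intro t
    induction t with
    | zero =>
      intro k; rw [hQ0]; exact le_max_left _ _
    | succ t ih =>
      intro k
      rw [hQr]
      rcases le_total (g k (x (t + 1))) 0 with h | h
      · exact le_trans (by linarith) (le_max_left _ _)
      · exact le_trans (by nlinarith [ih k]) (le_max_right _ _)
  -- virtual multipliers are nonnegative
  have hQv : ∀ t k, 0 ≤ Q t k + g k (x t) := by
    intro t k
    cases t with
    | zero =>
      have := hQ0 k
      have h2 : -(g k (x 0)) ≤ Q 0 k := by rw [this]; exact le_max_right _ _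
      linarith
    | succ t =>
      have h2 : -(g k (x (t + 1))) ≤ Q (t + 1) k := by
        rw [hQr]; exact le_max_left _ _
      linarith
  have hstep : ∀ t k, Q t k + g k (x (t + 1)) ≤ Q (t + 1) k := by
    intro t k; rw [hQr]; exact le_max_right _ _
  -- The key per-iteration inequality (main bound and Lyapunov decrease).
  have key : ∀ t : ℕ, ‖Q t‖ ≤ M →
      ((1 / 2) * (‖Q (t + 1)‖ ^ 2 - ‖Q t‖ ^ 2) + f (x (t + 1)) ≤
        f xstar + (1 / (2 * γ)) * (‖xstar - x t‖ ^ 2 - ‖xstar - x (t + 1)‖ ^ 2)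
          + (1 / 2) * (‖gvec g (x (t + 1))‖ ^ 2 - ‖gvec g (x t)‖ ^ 2)) ∧
      ((1 / 2) * ‖Q (t + 1) - lam‖ ^ 2 + (1 / (2 * γ)) * ‖xstar - x (t + 1)‖ ^ 2
          - (1 / 2) * ‖gvec g (x (t + 1))‖ ^ 2 ≤
        (1 / 2) * ‖Q t - lam‖ ^ 2 + (1 / (2 * γ)) * ‖xstar - x t‖ ^ 2
          - (1 / 2) * ‖gvec g (x t)‖ ^ 2) := by
    intro t hQM
    -- abbreviations
    have hvk : ∀ k, 0 ≤ Q t k + g k (x t) := hQv t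
    -- descent lemmas
    have hdesf := descent_lemma hXcv f Gf Lf hfd hGfLip (hxX t) (hxX (t + 1))
    have hdesg : ∀ k, g k (x (t + 1)) ≤ g k (x t) + ⟪Gg k (x t), x (t + 1) - x t⟫
        + Lg k / 2 * ‖x (t + 1) - x t‖ ^ 2 :=
      fun k => descent_lemma hXcv (g k) (Gg k) (Lg k) (hgd k) (hGgLip k) (hxX t) (hxX (t + 1))
    -- convexity inequalities
    have hcvf := convex_grad_le f hf (hfd (x t)) (hxX t) hxs
    have hcvg : ∀ k, g k (x t) + ⟪Gg k (x t), xstar - x t⟫ ≤ g k xstar :=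
      fun k => convex_grad_le (g k) (hg k) (hgd k (x t)) (hxX t) hxs
    -- proximal inequality
    have hprox : ⟪d t, x (t + 1) - xstar⟫ ≤
        (1 / (2 * γ)) * (‖xstar - x t‖ ^ 2 - ‖xstar - x (t + 1)‖ ^ 2
          - ‖x (t + 1) - x t‖ ^ 2) := by
      have h0 := proj_inner_le hXcv (hxX (t + 1)) (hproj t) xstar hxs
      have h1 : (x t - γ • d t) - x (t + 1) = (x t - x (t + 1)) - γ • d t := by abel
      rw [h1, inner_sub_left, real_inner_smul_left] at h0
      have hpol := norm_sub_sq_real (x t - x (t + 1)) (xstar - x (t + 1))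
      have he1 : (x t - x (t + 1)) - (xstar - x (t + 1)) = x t - xstar := by abel
      rw [he1] at hpol
      have he2 : ‖x t - xstar‖ = ‖xstar - x t‖ := norm_sub_rev _ _
      have he3 : ‖x t - x (t + 1)‖ = ‖x (t + 1) - x t‖ := norm_sub_rev _ _
      rw [he2, he3] at hpol
      have he4 : ⟪d t, x (t + 1) - xstar⟫ = -⟪d t, xstar - x (t + 1)⟫ := by
        rw [show x (t + 1) - xstar = -(xstar - x (t + 1)) by abel, inner_neg_right]
      rw [he4, show (1 / (2 * γ)) * (‖xstar - x t‖ ^ 2 - ‖xstar - x (t + 1)‖ ^ 2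
          - ‖x (t + 1) - x t‖ ^ 2) = (‖xstar - x t‖ ^ 2 - ‖xstar - x (t + 1)‖ ^ 2
          - ‖x (t + 1) - x t‖ ^ 2) / (2 * γ) from by ring, le_div_iff₀ hγ2]
      nlinarith [h0, hpol]
    -- expansion of the search direction
    have hd_inner : ∀ w : EuclideanSpace ℝ (Fin n), ⟪d t, w⟫ =
        ⟪Gf (x t), w⟫ + ∑ k, (Q t k + g k (x t)) * ⟪Gg k (x t), w⟫ := by
      intro w
      rw [hd t, inner_add_left, sum_inner]
      congr 1
      exact Finset.sum_congr rfl fun k _ => real_inner_smul_left _ _ _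
    -- splitting inner products through xstar
    have hsplitf : ⟪Gf (x t), x (t + 1) - x t⟫ =
        ⟪Gf (x t), xstar - x t⟫ + ⟪Gf (x t), x (t + 1) - xstar⟫ := by
      rw [← inner_add_right]; congr 1; abel
    have hsplitg : ∀ k : Fin m, ⟪Gg k (x t), x (t + 1) - x t⟫ =
        ⟪Gg k (x t), xstar - x t⟫ + ⟪Gg k (x t), x (t + 1) - xstar⟫ := by
      intro k; rw [← inner_add_right]; congr 1; abel
    have h6split : ∑ k, (Q t k + g k (x t)) * ⟪Gg k (x t), x (t + 1) - x t⟫ =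
        (∑ k, (Q t k + g k (x t)) * ⟪Gg k (x t), xstar - x t⟫)
        + ∑ k, (Q t k + g k (x t)) * ⟪Gg k (x t), x (t + 1) - xstar⟫ := by
      rw [← Finset.sum_add_distrib]
      exact Finset.sum_congr rfl fun k _ => by rw [hsplitg k]; ring
    -- smoothness applied to the constraints, summed
    have hsum1 : ∑ k, (Q t k + g k (x t)) * g k (x (t + 1)) ≤
        (∑ k, (Q t k + g k (x t)) * g k (x t))
        + (∑ k, (Q t k + g k (x t)) * ⟪Gg k (x t), x (t + 1) - x t⟫)
        + (∑ k, (Q t k + g k (x t)) * Lg k) * (‖x (t + 1) - x t‖ ^ 2 / 2) := by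
      have h2 : ∑ k, (Q t k + g k (x t)) * g k (x (t + 1)) ≤
          ∑ k, ((Q t k + g k (x t)) * g k (x t)
            + (Q t k + g k (x t)) * ⟪Gg k (x t), x (t + 1) - x t⟫
            + ((Q t k + g k (x t)) * Lg k) * (‖x (t + 1) - x t‖ ^ 2 / 2)) := by
        apply Finset.sum_le_sum
        intro k _
        have := mul_le_mul_of_nonneg_left (hdesg k) (hvk k)
        linarith [this]
      calc ∑ k, (Q t k + g k (x t)) * g k (x (t + 1)) ≤ _ := h2
        _ = _ := by
          rw [Finset.sum_add_distrib, Finset.sum_add_distrib, ← Finset.sum_mul]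
    -- convexity applied to the constraints, summed
    have hcvsum : (∑ k, (Q t k + g k (x t)) * g k (x t))
        + (∑ k, (Q t k + g k (x t)) * ⟪Gg k (x t), xstar - x t⟫) ≤
        ∑ k, (Q t k + g k (x t)) * g k xstar := by
      rw [← Finset.sum_add_distrib]
      apply Finset.sum_le_sum
      intro k _
      have := mul_le_mul_of_nonneg_left (hcvg k) (hvk k)
      linarith [this]
    have hfeas : ∑ k, (Q t k + g k (x t)) * g k xstar ≤ 0 :=
      Finset.sum_nonpos fun k _ => mul_nonpos_iff.2 (Or.inl ⟨hvk k, hxsFeas k⟩)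
    -- bound on the multiplier sum
    have hSle : ∑ k, (Q t k + g k (x t)) * Lg k ≤ (M + C) * ‖Lg‖ := by
      have e : ∑ k, (Q t k + g k (x t)) * Lg k = ⟪Q t + gvec g (x t), Lg⟫ := by
        rw [inner_euc]
        exact Finset.sum_congr rfl fun k _ => by simp [gvec_apply]
      calc ∑ k, (Q t k + g k (x t)) * Lg k = ⟪Q t + gvec g (x t), Lg⟫ := e
        _ ≤ ‖Q t + gvec g (x t)‖ * ‖Lg‖ := real_inner_le_norm _ _
        _ ≤ (M + C) * ‖Lg‖ := by
          apply mul_le_mul_of_nonneg_right _ (norm_nonneg _)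
          calc ‖Q t + gvec g (x t)‖ ≤ ‖Q t‖ + ‖gvec g (x t)‖ := norm_add_le _ _
            _ ≤ M + C := add_le_add hQM (hgC _ (hxX t))
    have hE : 2 * (1 / (2 * γ)) = 1 / γ := by
      field_simp
    have hcoef : (β ^ 2 + Lf + (∑ k, (Q t k + g k (x t)) * Lg k)) / 2
        - 1 / (2 * γ) ≤ 0 := by
      have e : (M + C) * ‖Lg‖ = 2 * ‖lam‖ * ‖Lg‖ + 2 * C * ‖Lg‖
          + ‖Lg‖ * R / Real.sqrt γ := by
        rw [hM]; ring
      linarith [hSle, hγcond, hE]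
    have hN : 0 ≤ ‖x (t + 1) - x t‖ ^ 2 := sq_nonneg _
    have hprod : ((β ^ 2 + Lf + (∑ k, (Q t k + g k (x t)) * Lg k)) / 2 - 1 / (2 * γ))
        * ‖x (t + 1) - x t‖ ^ 2 ≤ 0 :=
      mul_nonpos_iff.2 (Or.inr ⟨hcoef, hN⟩)
    -- the master inequality (P3)
    have hP3 : f (x (t + 1)) + ∑ k, (Q t k + g k (x t)) * g k (x (t + 1)) ≤
        f xstar + (1 / (2 * γ)) * (‖xstar - x t‖ ^ 2 - ‖xstar - x (t + 1)‖ ^ 2)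
        + ((Lf + (∑ k, (Q t k + g k (x t)) * Lg k)) / 2 - 1 / (2 * γ))
          * ‖x (t + 1) - x t‖ ^ 2 := by
      have hdw := hd_inner (x (t + 1) - xstar)
      linarith [hdesf, hsum1, h6split, hsplitf, hdw, hprox, hcvf, hcvsum, hfeas]
    -- drift bound (P1)
    have hq2 : ∀ k : Fin m, (Q (t + 1) k) ^ 2 ≤ (Q t k) ^ 2
        + 2 * (Q t k * g k (x (t + 1))) + 2 * (g k (x (t + 1))) ^ 2 := by
      intro k
      rw [hQr]
      rcases max_cases (-(g k (x (t + 1)))) (Q t k + g k (x (t + 1))) with ⟨h, _⟩ | ⟨h, _⟩ <;>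
        rw [h] <;> nlinarith [sq_nonneg (Q t k + g k (x (t + 1)))]
    have hdrift : ‖Q (t + 1)‖ ^ 2 ≤ ‖Q t‖ ^ 2
        + 2 * (∑ k, Q t k * g k (x (t + 1))) + 2 * ‖gvec g (x (t + 1))‖ ^ 2 := by
      rw [norm_sq_euc, norm_sq_euc, norm_sq_euc]
      have h2 := Finset.sum_le_sum (fun k (_ : k ∈ Finset.univ) => hq2 k)
      calc ∑ k, (Q (t + 1) k) ^ 2 ≤
          ∑ k, ((Q t k) ^ 2 + 2 * (Q t k * g k (x (t + 1))) + 2 * (g k (x (t + 1))) ^ 2) := h2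
        _ = (∑ k, (Q t k) ^ 2) + 2 * (∑ k, Q t k * g k (x (t + 1)))
            + 2 * ∑ k, (gvec g (x (t + 1)) k) ^ 2 := by
          rw [Finset.sum_add_distrib, Finset.sum_add_distrib, ← Finset.mul_sum, ← Finset.mul_sum]
          simp only [gvec_apply]
    have hsplitQ : ∑ k, Q t k * g k (x (t + 1)) =
        (∑ k, (Q t k + g k (x t)) * g k (x (t + 1)))
        - ⟪gvec g (x t), gvec g (x (t + 1))⟫ := by
      rw [inner_euc, ← Finset.sum_sub_distrib]
      exact Finset.sum_congr rfl fun k _ => by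
        rw [gvec_apply, gvec_apply]
        ring
    have hip : 2 * ⟪gvec g (x t), gvec g (x (t + 1))⟫ =
        ‖gvec g (x t)‖ ^ 2 + ‖gvec g (x (t + 1))‖ ^ 2
        - ‖gvec g (x (t + 1)) - gvec g (x t)‖ ^ 2 := by
      have h2 := norm_sub_sq_real (gvec g (x t)) (gvec g (x (t + 1)))
      have h3 : ‖gvec g (x t) - gvec g (x (t + 1))‖ =
          ‖gvec g (x (t + 1)) - gvec g (x t)‖ := norm_sub_rev _ _
      rw [h3] at h2
      linarith
    have hlip2 : ‖gvec g (x (t + 1)) - gvec g (x t)‖ ^ 2 ≤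
        β ^ 2 * ‖x (t + 1) - x t‖ ^ 2 := by
      have h2 := hgLip (x (t + 1)) (hxX (t + 1)) (x t) (hxX t)
      nlinarith [norm_nonneg (gvec g (x (t + 1)) - gvec g (x t)),
        norm_nonneg (x (t + 1) - x t)]
    -- (P2) Lyapunov algebra
    have hlami : ∑ k, lam k * g k (x (t + 1)) ≤ ⟪Q (t + 1) - Q t, lam⟫ := by
      rw [inner_euc]
      apply Finset.sum_le_sum
      intro k _
      have h2 : (Q (t + 1) - Q t) k = Q (t + 1) k - Q t k := rfl
      rw [h2]
      have h3 : g k (x (t + 1)) ≤ Q (t + 1) k - Q t k := by linarith [hstep t k]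
      nlinarith [mul_le_mul_of_nonneg_left h3 (hlam k)]
    have hvalg : ‖Q (t + 1) - lam‖ ^ 2 - ‖Q t - lam‖ ^ 2 =
        ‖Q (t + 1)‖ ^ 2 - ‖Q t‖ ^ 2 - 2 * ⟪Q (t + 1) - Q t, lam⟫ := by
      have e1 := norm_sub_sq_real (Q (t + 1)) lam
      have e2 := norm_sub_sq_real (Q t) lam
      have e3 : ⟪Q (t + 1) - Q t, lam⟫ = ⟪Q (t + 1), lam⟫ - ⟪Q t, lam⟫ :=
        inner_sub_left _ _ _
      linarith
    have hdual : f xstar ≤ f (x (t + 1)) + ∑ k, lam k * g k (x (t + 1)) :=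
      hduality.1 ⟨x (t + 1), hxX (t + 1), rfl⟩
    constructor
    · linarith [hdrift, hsplitQ, hip, hlip2, hP3, hprod]
    · linarith [hvalg, hlami, hdual, hdrift, hsplitQ, hip, hlip2, hP3, hprod]
  -- the Lyapunov function
  set V : ℕ → ℝ := fun s => (1 / 2) * ‖Q s - lam‖ ^ 2
    + (1 / (2 * γ)) * ‖xstar - x s‖ ^ 2 - (1 / 2) * ‖gvec g (x s)‖ ^ 2 with hV
  have hVexp : ∀ u : ℕ, V u = (1 / 2) * ‖Q u - lam‖ ^ 2
      + (1 / (2 * γ)) * ‖xstar - x u‖ ^ 2 - (1 / 2) * ‖gvec g (x u)‖ ^ 2 :=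
    fun u => by simp only [hV]
  have hQ0sq : ‖Q 0‖ ^ 2 ≤ ‖gvec g (x 0)‖ ^ 2 := by
    rw [norm_sq_euc, norm_sq_euc]
    apply Finset.sum_le_sum
    intro k _
    rw [gvec_apply]
    rw [hQ0]
    rcases max_cases (0 : ℝ) (-(g k (x 0))) with ⟨h, h'⟩ | ⟨h, h'⟩ <;> rw [h] <;> nlinarith
  have hQ0lam : 0 ≤ ⟪Q 0, lam⟫ := by
    rw [inner_euc]
    exact Finset.sum_nonneg fun k _ => mul_nonneg (hQpos 0 k) (hlam k)
  have hV0 : (1 / 2) * ‖Q 0 - lam‖ ^ 2 + (1 / (2 * γ)) * ‖xstar - x 0‖ ^ 2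
      - (1 / 2) * ‖gvec g (x 0)‖ ^ 2 ≤ (1 / 2) * ‖lam‖ ^ 2 + R ^ 2 / (2 * γ) := by
    have e := norm_sub_sq_real (Q 0) lam
    have hx0R : ‖xstar - x 0‖ ^ 2 ≤ R ^ 2 := by
      nlinarith [hR xstar hxs (x 0) (hxX 0), norm_nonneg (xstar - x 0)]
    have h2 : (1 / (2 * γ)) * ‖xstar - x 0‖ ^ 2 ≤ (1 / (2 * γ)) * R ^ 2 :=
      mul_le_mul_of_nonneg_left hx0R (by positivity)
    have h3 : (1 / (2 * γ)) * R ^ 2 = R ^ 2 / (2 * γ) := by ring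
    linarith
  have hQfromV : ∀ s, V s ≤ V 0 → ‖Q s‖ ≤ M := by
    intro s hVs
    have hgs : ‖gvec g (x s)‖ ^ 2 ≤ C ^ 2 := by
      nlinarith [hgC (x s) (hxX s), norm_nonneg (gvec g (x s))]
    have hxs2 : 0 ≤ (1 / (2 * γ)) * ‖xstar - x s‖ ^ 2 := by positivity
    have hVs' : (1 / 2) * ‖Q s - lam‖ ^ 2 ≤
        (1 / 2) * ‖lam‖ ^ 2 + R ^ 2 / (2 * γ) + (1 / 2) * C ^ 2 := by
      have h4 := hVs
      rw [hVexp s, hVexp 0] at h4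
      linarith [hV0]
    have hRγ : 2 * (R ^ 2 / (2 * γ)) = (R / Real.sqrt γ) ^ 2 := by
      rw [div_pow, hstsq]
      field_simp
    have hsq : ‖Q s - lam‖ ^ 2 ≤ ‖lam‖ ^ 2 + (R / Real.sqrt γ) ^ 2 + C ^ 2 := by
      linarith
    have hb : (0:ℝ) ≤ ‖lam‖ + R / Real.sqrt γ + C := by
      have := norm_nonneg lam
      linarith
    have hb2 : ‖lam‖ ^ 2 + (R / Real.sqrt γ) ^ 2 + C ^ 2 ≤
        (‖lam‖ + R / Real.sqrt γ + C) ^ 2 := by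
      have e2 : (‖lam‖ + R / Real.sqrt γ + C) ^ 2 = ‖lam‖ ^ 2 + (R / Real.sqrt γ) ^ 2
          + C ^ 2 + 2 * (‖lam‖ * (R / Real.sqrt γ)) + 2 * (‖lam‖ * C)
          + 2 * ((R / Real.sqrt γ) * C) := by ring
      linarith [mul_nonneg (norm_nonneg lam) hRst, mul_nonneg (norm_nonneg lam) hC0,
        mul_nonneg hRst hC0]
    have hle : ‖Q s - lam‖ ≤ ‖lam‖ + R / Real.sqrt γ + C := by
      calc ‖Q s - lam‖ = Real.sqrt (‖Q s - lam‖ ^ 2) :=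
            (Real.sqrt_sq (norm_nonneg _)).symm
        _ ≤ Real.sqrt ((‖lam‖ + R / Real.sqrt γ + C) ^ 2) :=
            Real.sqrt_le_sqrt (by linarith)
        _ = ‖lam‖ + R / Real.sqrt γ + C := Real.sqrt_sq hb
    have htri : ‖Q s‖ ≤ ‖lam‖ + ‖Q s - lam‖ := by
      calc ‖Q s‖ = ‖lam + (Q s - lam)‖ := by rw [add_sub_cancel]
        _ ≤ ‖lam‖ + ‖Q s - lam‖ := norm_add_le _ _
    rw [hM]
    linarith
  have bound : ∀ t : ℕ, V t ≤ V 0 ∧ ‖Q t‖ ≤ M := by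
    intro t
    induction t with
    | zero => exact ⟨le_refl _, hQfromV 0 (le_refl _)⟩
    | succ t ih =>
      have h2 := (key t ih.2).2
      have h3 : V (t + 1) ≤ V t := by
        rw [hVexp (t + 1), hVexp t]; linarith [h2]
      exact ⟨h3.trans ih.1, hQfromV (t + 1) (h3.trans ih.1)⟩
  intro t
  exact (key t (bound t).2).1
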